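/- There exist an N×N doubly-stochastic matrix A (for some N ≥ 2), a symmetric positive-definite matrix R, and a step-size μ > 0 such that ρ(I - 2μR) < 1 (each non-cooperative agent is mean-stable) but the matrix B_cons = Aᵀ⊗I_M - 2μ(I_N⊗R) has spectral radius at least 1. Concretely, for N = 2, A = [[0,1],[1,0]], M = 1, R = r > 0 with 0 < 2μr < 2: the eigenvalues of B_cons are ±1 - 2μr, and |-1 - 2μr| = 1 + 2μr > 1. -/

import Mathlib

open Matrix Kronecker

theorem stmt16 :
    ∃ (A : Matrix (Fin 2) (Fin 2) ℝ) (R : Matrix (Fin 1) (Fin 1) ℝ) (μ : ℝ),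
      (∀ i j, 0 ≤ A i j) ∧ (∀ k, ∑ l, A l k = 1) ∧ (∀ l, ∑ k, A l k = 1) ∧
      R.IsHermitian ∧ R.PosDef ∧ 0 < μ ∧
      (∀ z ∈ spectrum ℂ (((1 : Matrix (Fin 1) (Fin 1) ℝ) - (2 * μ) • R).map Complex.ofReal),
        ‖z‖ < 1) ∧
      (∃ z ∈ spectrum ℂ
          ((Aᵀ ⊗ₖ (1 : Matrix (Fin 1) (Fin 1) ℝ)
            - (2 * μ) • ((1 : Matrix (Fin 2) (Fin 2) ℝ) ⊗ₖ R)).map Complex.ofReal),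
        1 ≤ ‖z‖) := by
  refine ⟨!![0,1;1,0], !![1], 1/4, ?_, ?_, ?_, ?_, ?_, by norm_num, ?_, ?_⟩
  · intro i j; fin_cases i <;> fin_cases j <;> norm_num
  · intro k; fin_cases k <;> simp [Fin.sum_univ_two]
  · intro l; fin_cases l <;> simp [Fin.sum_univ_two]
  · have h1 : (!![1] : Matrix (Fin 1) (Fin 1) ℝ) = 1 := by
      ext i j; fin_cases i; fin_cases j; simp
    rw [h1]; exact Matrix.isHermitian_one
  · have h1 : (!![1] : Matrix (Fin 1) (Fin 1) ℝ) = 1 := by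
      ext i j; fin_cases i; fin_cases j; simp
    rw [h1]; exact Matrix.PosDef.one
  · -- spectrum of 1×1 matrix equals {1/2}
    have hM : ((1 : Matrix (Fin 1) (Fin 1) ℝ) - (2 * (1/4:ℝ)) • (!![1] : Matrix (Fin 1) (Fin 1) ℝ)).map Complex.ofReal = !![(1/2 : ℂ)] := by
      ext i j
      fin_cases i; fin_cases j
      norm_num [Matrix.map_apply, Matrix.one_apply]
    rw [hM]
    intro z hz
    rw [spectrum.mem_iff] at hz
    have hdet : IsUnit ((algebraMap ℂ (Matrix (Fin 1) (Fin 1) ℂ)) z - !![(1/2:ℂ)]).det ↔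
        IsUnit ((algebraMap ℂ (Matrix (Fin 1) (Fin 1) ℂ)) z - !![(1/2:ℂ)]) :=
      (Matrix.isUnit_iff_isUnit_det _).symm
    have : ((algebraMap ℂ (Matrix (Fin 1) (Fin 1) ℂ)) z - !![(1/2:ℂ)]).det = z - 1/2 := by
      simp [Matrix.det_fin_one, Matrix.algebraMap_matrix_apply]
    rw [← hdet, this, isUnit_iff_ne_zero, not_not, sub_eq_zero] at hz
    subst hz
    norm_num
  · refine ⟨(-3/2 : ℂ), ?_, by norm_num⟩
    rw [spectrum.mem_iff]
    set B := (((!![0,1;1,0] : Matrix (Fin 2) (Fin 2) ℝ))ᵀ ⊗ₖ (1 : Matrix (Fin 1) (Fin 1) ℝ)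
            - (2 * (1/4:ℝ)) • ((1 : Matrix (Fin 2) (Fin 2) ℝ) ⊗ₖ (!![1] : Matrix (Fin 1) (Fin 1) ℝ))).map Complex.ofReal with hB
    set M := (algebraMap ℂ (Matrix (Fin 2 × Fin 1) (Fin 2 × Fin 1) ℂ)) (-3/2 : ℂ) - B with hMdef
    intro hu
    set v : Fin 2 × Fin 1 → ℂ := fun p => if p.1 = 0 then 1 else -1 with hv
    have hv0 : v ≠ 0 := by
      intro h
      have := congrFun h (0, 0)
      simp [hv] at this
    have hT : (!![0,1;1,0] : Matrix (Fin 2) (Fin 2) ℝ)ᵀ = !![0,1;1,0] := by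
      ext i j; fin_cases i <;> fin_cases j <;> simp
    have hMv : M *ᵥ v = 0 := by
      ext p
      obtain ⟨i, k⟩ := p
      fin_cases k
      fin_cases i <;>
        simp [hMdef, hB, hT, hv, Matrix.mulVec, dotProduct, Fintype.sum_prod_type,
          Fin.sum_univ_two, Fin.sum_univ_one, Matrix.kroneckerMap_apply, Matrix.one_apply,
          Matrix.algebraMap_matrix_apply, Matrix.map_apply, Prod.ext_iff] <;> ring
    have := Matrix.exists_mulVec_eq_zero_iff.mp ⟨v, hv0, hMv⟩
    exact (isUnit_iff_ne_zero.mp ((Matrix.isUnit_iff_isUnit_det M).mp hu)) this
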